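/- arXiv:1005.1769 — 2 statements merged into one kernel-verified Lean document; each statement's English description precedes it below -/
import Mathlib

section
/- In the setting of the moment problem in a strip, if conditions (2.1) and (2.2) hold, then the shift operator B₀(∑ α_{m,n} x_{m,n}) = ∑ α_{m,n} x_{m,n+1} on L is well-defined, symmetric, and bounded with ‖B₀ x‖ ≤ R‖x‖ for all x in L; hence its closure B is a bounded self-adjoint operator on H with ‖B‖ ≤ R. -/
open Finsupp
open scoped ComplexOrder

section Aux

variable {H : Type} [NormedAddCommGroup H] [InnerProductSpace ℂ H]

/-- Inner product of two finite linear combinations. -/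
private lemma inner_lc (v w : ℕ × ℕ → H) (α β : (ℕ × ℕ) →₀ ℂ) :
    (inner ℂ (Finsupp.linearCombination ℂ v α) (Finsupp.linearCombination ℂ w β) : ℂ)
      = ∑ p ∈ α.support, ∑ q ∈ β.support,
          (starRingEnd ℂ) (α p) * β q * inner ℂ (v p) (w q) := by
  rw [Finsupp.linearCombination_apply, Finsupp.linearCombination_apply, Finsupp.sum, Finsupp.sum,
    sum_inner]
  refine Finset.sum_congr rfl fun p _ => ?_
  rw [inner_sum]
  refine Finset.sum_congr rfl fun q _ => ?_
  rw [inner_smul_left, inner_smul_right]; ring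

/-- The shifted linear-combination map `α ↦ ∑ α_{m,n} x_{m,n+j}`. -/
private noncomputable def Smap (x : ℕ × ℕ → H) (j : ℕ) : ((ℕ × ℕ) →₀ ℂ) →ₗ[ℂ] H :=
  Finsupp.linearCombination ℂ (fun p => x (p.1, p.2 + j))

end Aux

/-- Under conditions (2.1) and (2.2), the shift `B₀ : x_{m,n} ↦ x_{m,n+1}` on
`L = span{x_{m,n}}` is well-defined, symmetric and bounded with `‖B₀ x‖ ≤ R ‖x‖`; hence its
closure `B` is an (everywhere defined) bounded self-adjoint operator on `H` with `‖B‖ ≤ R`. -/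
theorem stmt5 (H : Type) [NormedAddCommGroup H] [InnerProductSpace ℂ H] [CompleteSpace H]
    (R : ℝ) (hR : 0 < R) (s : ℕ → ℕ → ℂ)
    (h21 : ∀ α : (ℕ × ℕ) →₀ ℂ,
      0 ≤ ∑ p ∈ α.support, ∑ q ∈ α.support,
        α p * (starRingEnd ℂ) (α q) * s (p.1 + q.1) (p.2 + q.2))
    (h22 : ∀ α : (ℕ × ℕ) →₀ ℂ,
      0 ≤ ∑ p ∈ α.support, ∑ q ∈ α.support,
        α p * (starRingEnd ℂ) (α q) *
          ((R : ℂ) ^ 2 * s (p.1 + q.1) (p.2 + q.2) - s (p.1 + q.1) (p.2 + q.2 + 2)))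
    (x : ℕ × ℕ → H)
    (hs : ∀ m n k l : ℕ, (inner ℂ (x (k, l)) (x (m, n)) : ℂ) = s (m + k) (n + l))
    (hdense : (Submodule.span ℂ (Set.range x)).topologicalClosure = ⊤) :
    ∃ B : H →L[ℂ] H,
      (∀ m n : ℕ, B (x (m, n)) = x (m, n + 1)) ∧
      (∀ u v : H, (inner ℂ (B u) v : ℂ) = inner ℂ u (B v)) ∧
      IsSelfAdjoint B ∧ ‖B‖ ≤ R := by
  classical
  -- Gram identity for the shifted combinations
  have gram : ∀ (j : ℕ) (α : (ℕ × ℕ) →₀ ℂ),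
      (inner ℂ (Smap x j α) (Smap x j α) : ℂ)
        = ∑ p ∈ α.support, ∑ q ∈ α.support,
            α p * (starRingEnd ℂ) (α q) * s (p.1 + q.1) (p.2 + q.2 + (j + j)) := by
    intro j α
    rw [Smap, inner_lc, Finset.sum_comm]
    refine Finset.sum_congr rfl fun a _ => Finset.sum_congr rfl fun b _ => ?_
    rw [hs a.1 (a.2 + j) b.1 (b.2 + j)]
    have h2 : a.2 + j + (b.2 + j) = a.2 + b.2 + (j + j) := by omega
    rw [h2]; ring
  -- Key bound ‖Ψα‖ ≤ R ‖Φα‖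
  have key : ∀ α : (ℕ × ℕ) →₀ ℂ, ‖Smap x 1 α‖ ≤ R * ‖Smap x 0 α‖ := by
    intro α
    have h := h22 α
    have hsplit : (∑ p ∈ α.support, ∑ q ∈ α.support,
        α p * (starRingEnd ℂ) (α q) *
          ((R : ℂ) ^ 2 * s (p.1 + q.1) (p.2 + q.2) - s (p.1 + q.1) (p.2 + q.2 + 2)))
        = (R : ℂ) ^ 2 * (inner ℂ (Smap x 0 α) (Smap x 0 α) : ℂ)
            - (inner ℂ (Smap x 1 α) (Smap x 1 α) : ℂ) := by
      rw [gram 0 α, gram 1 α, Finset.mul_sum, ← Finset.sum_sub_distrib]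
      refine Finset.sum_congr rfl fun p _ => ?_
      rw [Finset.mul_sum, ← Finset.sum_sub_distrib]
      refine Finset.sum_congr rfl fun q _ => ?_
      have e0 : p.2 + q.2 + (0 + 0) = p.2 + q.2 := by omega
      have e1 : p.2 + q.2 + (1 + 1) = p.2 + q.2 + 2 := by omega
      rw [e0, e1]; ring
    rw [hsplit] at h
    have hin : ∀ y : H, (inner ℂ y y : ℂ) = ((‖y‖ ^ 2 : ℝ) : ℂ) := fun y => by
      rw [inner_self_eq_norm_sq_to_K]; exact (Complex.ofReal_pow _ _).symm
    rw [hin, hin] at h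
    have h' : 0 ≤ R ^ 2 * ‖Smap x 0 α‖ ^ 2 - ‖Smap x 1 α‖ ^ 2 := by
      refine Complex.zero_le_real.mp ?_
      rw [Complex.ofReal_sub, Complex.ofReal_mul, Complex.ofReal_pow]
      exact h
    nlinarith [norm_nonneg (Smap x 1 α), norm_nonneg (Smap x 0 α),
      mul_nonneg hR.le (norm_nonneg (Smap x 0 α))]
  -- Well-definedness of the shift on L
  have hker : LinearMap.ker (Smap x 0) ≤ LinearMap.ker (Smap x 1) := by
    intro α hα
    rw [LinearMap.mem_ker] at hα ⊢
    have h := key α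
    rw [hα, norm_zero, mul_zero] at h
    exact norm_le_zero_iff.mp h
  set B₀ : ↥(LinearMap.range (Smap x 0)) →ₗ[ℂ] H :=
    ((LinearMap.ker (Smap x 0)).liftQ (Smap x 1) hker).comp
      ((Smap x 0).quotKerEquivRange.symm.toLinearMap) with hB₀def
  have hB₀ : ∀ (α : (ℕ × ℕ) →₀ ℂ) (h : Smap x 0 α ∈ LinearMap.range (Smap x 0)),
      B₀ ⟨Smap x 0 α, h⟩ = Smap x 1 α := by
    intro α h
    rw [hB₀def]
    simp only [LinearMap.comp_apply, LinearEquiv.coe_coe,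
      LinearMap.quotKerEquivRange_symm_apply_image, Submodule.mkQ_apply, Submodule.liftQ_apply]
  have hB₀bound : ∀ u : ↥(LinearMap.range (Smap x 0)), ‖B₀ u‖ ≤ R * ‖u‖ := by
    rintro ⟨_, α, rfl⟩
    rw [hB₀ α ⟨α, rfl⟩]
    simpa using key α
  set B₀c : ↥(LinearMap.range (Smap x 0)) →L[ℂ] H := B₀.mkContinuous R hB₀bound with hB₀cdef
  set e : ↥(LinearMap.range (Smap x 0)) →L[ℂ] H := (LinearMap.range (Smap x 0)).subtypeL with hedef
  have hx0 : (fun p : ℕ × ℕ => x (p.1, p.2 + 0)) = x := by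
    funext p; simp
  have hrange : LinearMap.range (Smap x 0) = Submodule.span ℂ (Set.range x) := by
    rw [Smap, Finsupp.range_linearCombination, hx0]
  have hd : Dense ((LinearMap.range (Smap x 0) : Submodule ℂ H) : Set H) := by
    rw [hrange]
    exact Submodule.dense_iff_topologicalClosure_eq_top.mpr hdense
  have h_dense : DenseRange e := by
    have hre : Set.range e = ((LinearMap.range (Smap x 0) : Submodule ℂ H) : Set H) :=
      Subtype.range_coe
    rw [DenseRange, hre]; exact hd
  have h_e : ∀ u : ↥(LinearMap.range (Smap x 0)), ‖u‖ ≤ ((1 : NNReal) : ℝ) * ‖e u‖ := by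
    intro u; simp [hedef]
  set B : H →L[ℂ] H := B₀c.extend e
    with hBdef
  have hBe : ∀ α : (ℕ × ℕ) →₀ ℂ, B (Smap x 0 α) = Smap x 1 α := by
    intro α
    have hmem : Smap x 0 α ∈ LinearMap.range (Smap x 0) := ⟨α, rfl⟩
    have h1 : Smap x 0 α = e (⟨Smap x 0 α, hmem⟩ : ↥(LinearMap.range (Smap x 0))) := rfl
    rw [h1, hBdef, ContinuousLinearMap.extend_eq (h_dense := h_dense)
      (h_e := (ContinuousLinearMap.isUniformEmbedding_of_bound e h_e).isUniformInducing)]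
    exact hB₀ α hmem
  have hBx : ∀ m n : ℕ, B (x (m, n)) = x (m, n + 1) := by
    intro m n
    have h0 : Smap x 0 (Finsupp.single (m, n) 1) = x (m, n) := by
      simp [Smap, Finsupp.linearCombination_single]
    have h1 : Smap x 1 (Finsupp.single (m, n) 1) = x (m, n + 1) := by
      simp [Smap, Finsupp.linearCombination_single]
    rw [← h0, hBe, h1]
  -- symmetry on L
  have hsym0 : ∀ α β : (ℕ × ℕ) →₀ ℂ,
      (inner ℂ (Smap x 1 α) (Smap x 0 β) : ℂ) = inner ℂ (Smap x 0 α) (Smap x 1 β) := by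
    intro α β
    rw [Smap, Smap, inner_lc, inner_lc]
    refine Finset.sum_congr rfl fun p _ => Finset.sum_congr rfl fun q _ => ?_
    rw [hs q.1 (q.2 + 0) p.1 (p.2 + 1), hs q.1 (q.2 + 1) p.1 (p.2 + 0)]
    congr 2
    omega
  -- symmetry everywhere by density
  have hsym : ∀ u v : H, (inner ℂ (B u) v : ℂ) = inner ℂ u (B v) := by
    have step1 : ∀ (β : (ℕ × ℕ) →₀ ℂ) (u : H),
        (inner ℂ (B u) (Smap x 0 β) : ℂ) = inner ℂ u (Smap x 1 β) := by
      intro β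
      have hfg : (fun u : H => (inner ℂ (B u) (Smap x 0 β) : ℂ))
          = fun u : H => (inner ℂ u (Smap x 1 β) : ℂ) := by
        apply Continuous.ext_on hd
        · exact B.continuous.inner continuous_const
        · exact continuous_id.inner continuous_const
        · intro u hu
          obtain ⟨α, rfl⟩ := hu
          simp only
          rw [hBe]
          exact hsym0 α β
      exact fun u => congrFun hfg u
    intro u v
    have hfg : (fun v : H => (inner ℂ (B u) v : ℂ)) = fun v : H => (inner ℂ u (B v) : ℂ) := by
      apply Continuous.ext_on hd
      · exact continuous_const.inner continuous_id
      · exact continuous_const.inner B.continuous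
      · intro w hw
        obtain ⟨β, rfl⟩ := hw
        simp only
        rw [hBe]
        exact step1 β u
    exact congrFun hfg v
  have hsa : IsSelfAdjoint B :=
    ContinuousLinearMap.isSelfAdjoint_iff_isSymmetric.mpr fun u v => hsym u v
  have hnorm : ‖B‖ ≤ R := by
    have h1 : ‖B‖ ≤ ((1 : NNReal) : ℝ) * ‖B₀c‖ :=
      B₀c.opNorm_extend_le h_dense h_e
    have h2 : ‖B₀c‖ ≤ R := LinearMap.mkContinuous_norm_le _ hR.le _
    calc ‖B‖ ≤ ((1 : NNReal) : ℝ) * ‖B₀c‖ := h1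
      _ = ‖B₀c‖ := by rw [NNReal.coe_one, one_mul]
      _ ≤ R := h2
  exact ⟨B, hBx, hsym, hsa, hnorm⟩
end

section
/- Every unitary operator U on a separable complex Hilbert space can be written as a product U = KL of two conjugations K and L (antilinear involutive isometries). -/
open scoped InnerProductSpace ComplexConjugate

set_option linter.unusedSectionVars false
set_option linter.unusedVariables false

noncomputable section GodicLucenko

namespace GLuc

variable {H : Type} [NormedAddCommGroup H] [InnerProductSpace ℂ H] [CompleteSpace H]

/-- shift lemma for `zpow`s of a unitary -/
lemma inner_zpow (U : H ≃ₗᵢ[ℂ] H) (m n : ℤ) (x y : H) :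
    ⟪(U ^ m) x, (U ^ n) y⟫_ℂ = ⟪(U ^ (m - n)) x, y⟫_ℂ := by
  have h := (U ^ n).inner_map_map ((U ^ (m - n)) x) y
  rw [← h]
  congr 1
  have : (U ^ n) ∘ (U ^ (m - n)) = ⇑(U ^ m) := by
    rw [← LinearIsometryEquiv.coe_mul, ← zpow_add]
    norm_num
  exact (congrFun this x).symm

/-- An orthogonal family of cyclic generators. -/
def Good (U : H ≃ₗᵢ[ℂ] H) (F : Set H) : Prop :=
  ∀ e ∈ F, ∀ e' ∈ F, e ≠ e' → ∀ m n : ℤ, ⟪(U ^ m) e, (U ^ n) e'⟫_ℂ = 0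

lemma good_flip {U : H ≃ₗᵢ[ℂ] H} {F : Set H} (hF : Good U F)
    {a b : H} (ha : a ∈ F) (hb : b ∈ F) (m n : ℤ) :
    ⟪(U ^ m) a, (U ^ n) b⟫_ℂ = ⟪(U ^ (-n)) b, (U ^ (-m)) a⟫_ℂ := by
  by_cases hab : a = b
  · subst hab
    rw [inner_zpow, inner_zpow]
    congr 2
    ring
  · rw [hF a ha b hb hab, hF b hb a ha (Ne.symm hab)]

/-- generators -/
def gen (U : H ≃ₗᵢ[ℂ] H) (F : Set H) : (↥F × ℤ) → H := fun p => (U ^ p.2) (p.1 : H)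

/-- the linear map from the free module to `H` -/
def piF (U : H ≃ₗᵢ[ℂ] H) (F : Set H) : ((↥F × ℤ) →₀ ℂ) →ₗ[ℂ] H :=
  Finsupp.linearCombination ℂ (gen U F)

/-- conjugation on the free module -/
def sg (F : Set H) : ((↥F × ℤ) →₀ ℂ) → ((↥F × ℤ) →₀ ℂ) := fun f =>
  Finsupp.mapRange (starRingEnd ℂ) (map_zero _)
    (Finsupp.equivMapDomain (Equiv.prodCongr (Equiv.refl ↥F) (Equiv.neg ℤ)) f)

/-- the conjugate-linear companion map -/
def lam (U : H ≃ₗᵢ[ℂ] H) (F : Set H) : ((↥F × ℤ) →₀ ℂ) → H := fun f => piF U F (sg F f)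

lemma sg_single (U : H ≃ₗᵢ[ℂ] H) (F : Set H) (e : ↥F) (n : ℤ) (a : ℂ) :
    sg F (Finsupp.single (e, n) a) = Finsupp.single (e, -n) (conj a) := by
  unfold sg
  rw [Finsupp.equivMapDomain_single, Finsupp.mapRange_single]
  rfl

lemma sg_add (F : Set H) (f g : (↥F × ℤ) →₀ ℂ) : sg F (f + g) = sg F f + sg F g := by
  unfold sg
  ext p
  simp [Finsupp.mapRange_apply, Finsupp.equivMapDomain_apply]

lemma sg_smul (F : Set H) (a : ℂ) (f : (↥F × ℤ) →₀ ℂ) : sg F (a • f) = conj a • sg F f := by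
  unfold sg
  ext p
  simp [Finsupp.mapRange_apply, Finsupp.equivMapDomain_apply, mul_comm]

lemma sg_sg (F : Set H) (f : (↥F × ℤ) →₀ ℂ) : sg F (sg F f) = f := by
  unfold sg
  ext p
  obtain ⟨e, n⟩ := p
  simp [Finsupp.mapRange_apply, Finsupp.equivMapDomain_apply]

lemma piF_single (U : H ≃ₗᵢ[ℂ] H) (F : Set H) (e : ↥F) (n : ℤ) (a : ℂ) :
    piF U F (Finsupp.single (e, n) a) = a • (U ^ n) (e : H) := by
  unfold piF
  rw [Finsupp.linearCombination_single]
  rfl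

lemma lam_single (U : H ≃ₗᵢ[ℂ] H) (F : Set H) (e : ↥F) (n : ℤ) (a : ℂ) :
    lam U F (Finsupp.single (e, n) a) = conj a • (U ^ (-n)) (e : H) := by
  unfold lam
  rw [sg_single U, piF_single]

lemma lam_add (U : H ≃ₗᵢ[ℂ] H) (F : Set H) (f g : (↥F × ℤ) →₀ ℂ) :
    lam U F (f + g) = lam U F f + lam U F g := by
  unfold lam; rw [sg_add, map_add]

lemma lam_smul (U : H ≃ₗᵢ[ℂ] H) (F : Set H) (a : ℂ) (f : (↥F × ℤ) →₀ ℂ) :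
    lam U F (a • f) = conj a • lam U F f := by
  unfold lam; rw [sg_smul, map_smul]

lemma lam_zero (U : H ≃ₗᵢ[ℂ] H) (F : Set H) : lam U F 0 = 0 := by
  unfold lam sg
  simp

lemma lam_sg (U : H ≃ₗᵢ[ℂ] H) (F : Set H) (f : (↥F × ℤ) →₀ ℂ) :
    lam U F (sg F f) = piF U F f := by
  unfold lam
  rw [sg_sg]

/-- the key identity on singles -/
lemma key_single {U : H ≃ₗᵢ[ℂ] H} {F : Set H} (hF : Good U F)
    (p q : ↥F × ℤ) (a b : ℂ) :
    ⟪piF U F (Finsupp.single p a), piF U F (Finsupp.single q b)⟫_ℂ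
      = ⟪lam U F (Finsupp.single q b), lam U F (Finsupp.single p a)⟫_ℂ := by
  obtain ⟨e, m⟩ := p
  obtain ⟨e', n⟩ := q
  rw [piF_single, piF_single, lam_single, lam_single]
  rw [inner_smul_left, inner_smul_right, inner_smul_left, inner_smul_right]
  rw [good_flip hF e.2 e'.2 m n]
  simp only [Complex.conj_conj]
  ring


/-- key identity: single vs arbitrary -/
lemma key_single_right {U : H ≃ₗᵢ[ℂ] H} {F : Set H} (hF : Good U F)
    (p : ↥F × ℤ) (a : ℂ) (g : (↥F × ℤ) →₀ ℂ) :
    ⟪piF U F (Finsupp.single p a), piF U F g⟫_ℂ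
      = ⟪lam U F g, lam U F (Finsupp.single p a)⟫_ℂ := by
  induction g using Finsupp.induction₂ with
  | zero => simp [lam_zero]
  | add_single q b g' _ _ ih =>
    rw [map_add, inner_add_right, lam_add, inner_add_left, ih, key_single hF p q a b]

/-- the key sesquilinear identity -/
lemma key_inner {U : H ≃ₗᵢ[ℂ] H} {F : Set H} (hF : Good U F) (f g : (↥F × ℤ) →₀ ℂ) :
    ⟪piF U F f, piF U F g⟫_ℂ = ⟪lam U F g, lam U F f⟫_ℂ := by
  induction f using Finsupp.induction₂ with
  | zero => simp [lam_zero]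
  | add_single p a f' _ _ ih =>
    rw [map_add, inner_add_left, lam_add, inner_add_right, ih, key_single_right hF p a g]

lemma lam_sub (U : H ≃ₗᵢ[ℂ] H) (F : Set H) (f g : (↥F × ℤ) →₀ ℂ) :
    lam U F (f - g) = lam U F f - lam U F g := by
  have h1 : f - g = f + (-1 : ℂ) • g := by
    rw [neg_one_smul]; abel
  rw [h1, lam_add, lam_smul]
  simp [sub_eq_add_neg]

/-- well-definedness -/
lemma lam_eq_of_piF_eq {U : H ≃ₗᵢ[ℂ] H} {F : Set H} (hF : Good U F)
    {f g : (↥F × ℤ) →₀ ℂ} (h : piF U F f = piF U F g) : lam U F f = lam U F g := by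
  have h2 : ⟪piF U F (f - g), piF U F (f - g)⟫_ℂ = ⟪lam U F (f - g), lam U F (f - g)⟫_ℂ :=
    key_inner hF _ _
  rw [map_sub, h, sub_self] at h2
  simp only [inner_zero_left] at h2
  have h3 : lam U F (f - g) = 0 := by
    rw [← inner_self_eq_zero (𝕜 := ℂ)]
    exact h2.symm
  rw [lam_sub] at h3
  exact sub_eq_zero.mp h3

lemma norm_lam {U : H ≃ₗᵢ[ℂ] H} {F : Set H} (hF : Good U F) (f : (↥F × ℤ) →₀ ℂ) :
    ‖lam U F f‖ = ‖piF U F f‖ := by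
  have h := key_inner hF f f
  have h1 : (‖piF U F f‖ : ℝ) ^ 2 = ‖lam U F f‖ ^ 2 := by
    have := congrArg (⇑(RCLike.re (K := ℂ))) h
    rwa [inner_self_eq_norm_sq (𝕜 := ℂ), inner_self_eq_norm_sq (𝕜 := ℂ)] at this
  calc ‖lam U F f‖ = √(‖lam U F f‖ ^ 2) := (Real.sqrt_sq (norm_nonneg _)).symm
    _ = √(‖piF U F f‖ ^ 2) := by rw [h1]
    _ = ‖piF U F f‖ := Real.sqrt_sq (norm_nonneg _)

/-- the range of `piF`, as a complex submodule -/
def Dc (U : H ≃ₗᵢ[ℂ] H) (F : Set H) : Submodule ℂ H := LinearMap.range (piF U F)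

/-- the range of `piF`, as a real submodule -/
def Dr (U : H ≃ₗᵢ[ℂ] H) (F : Set H) : Submodule ℝ H := (Dc U F).restrictScalars ℝ

/-- choice of representative -/
def rep (U : H ≃ₗᵢ[ℂ] H) (F : Set H) (x : ↥(Dr U F)) : (↥F × ℤ) →₀ ℂ :=
  ((LinearMap.mem_range (f := piF U F)).mp (show (x : H) ∈ Dc U F from x.2)).choose

lemma piF_rep (U : H ≃ₗᵢ[ℂ] H) (F : Set H) (x : ↥(Dr U F)) :
    piF U F (rep U F x) = (x : H) :=
  ((LinearMap.mem_range (f := piF U F)).mp (show (x : H) ∈ Dc U F from x.2)).choose_spec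

/-- the conjugation on the dense subspace, as a real-linear isometry -/
def L0 (U : H ≃ₗᵢ[ℂ] H) (F : Set H) (hF : Good U F) : ↥(Dr U F) →ₗᵢ[ℝ] H where
  toLinearMap :=
    { toFun := fun x => lam U F (rep U F x)
      map_add' := by
        intro x y
        show lam U F (rep U F (x + y)) = lam U F (rep U F x) + lam U F (rep U F y)
        have h : piF U F (rep U F (x + y)) = piF U F (rep U F x + rep U F y) := by
          rw [map_add, piF_rep, piF_rep, piF_rep]
          rfl
        rw [lam_eq_of_piF_eq hF h, lam_add]
      map_smul' := by
        intro r x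
        show lam U F (rep U F (r • x)) = r • lam U F (rep U F x)
        have h : piF U F (rep U F (r • x)) = piF U F ((r : ℂ) • rep U F x) := by
          rw [map_smul, piF_rep, piF_rep]
          rw [Complex.coe_smul]
          rfl
        rw [lam_eq_of_piF_eq hF h, lam_smul]
        simp [Complex.conj_ofReal] }
  norm_map' := by
    intro x
    show ‖lam U F (rep U F x)‖ = ‖x‖
    rw [norm_lam hF, piF_rep]
    rfl

lemma denseRange_subtypeL {U : H ≃ₗᵢ[ℂ] H} {F : Set H}
    (hdense : Dense ((Dc U F : Set H))) : DenseRange ((Dr U F).subtypeL) := by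
  show Dense (Set.range _)
  rw [Submodule.coe_subtypeL']
  have : Set.range (Dr U F).subtype = (Dr U F : Set H) := Subtype.range_coe
  rw [this]
  exact hdense

/-- the global conjugation -/
def Lc (U : H ≃ₗᵢ[ℂ] H) (F : Set H) (hF : Good U F)
    (hdense : Dense ((Dc U F : Set H))) : H →L[ℝ] H :=
  ContinuousLinearMap.extend (L0 U F hF).toContinuousLinearMap ((Dr U F).subtypeL)

lemma Lc_piF (U : H ≃ₗᵢ[ℂ] H) (F : Set H) (hF : Good U F)
    (hdense : Dense ((Dc U F : Set H))) (f : (↥F × ℤ) →₀ ℂ) :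
    Lc U F hF hdense (piF U F f) = lam U F f := by
  have hx : piF U F f ∈ Dr U F := ⟨f, rfl⟩
  have h1 : Lc U F hF hdense ((Dr U F).subtypeL ⟨piF U F f, hx⟩)
      = (L0 U F hF).toContinuousLinearMap ⟨piF U F f, hx⟩ :=
    ContinuousLinearMap.extend_eq (f := (L0 U F hF).toContinuousLinearMap)
      (e := (Dr U F).subtypeL) (denseRange_subtypeL hdense)
      (isUniformEmbedding_subtype_val.isUniformInducing) _
  have h2 : (L0 U F hF).toContinuousLinearMap ⟨piF U F f, hx⟩
      = lam U F (rep U F ⟨piF U F f, hx⟩) := rfl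
  have h3 : lam U F (rep U F ⟨piF U F f, hx⟩) = lam U F f :=
    lam_eq_of_piF_eq hF (by rw [piF_rep])
  have h4 : (Dr U F).subtypeL ⟨piF U F f, hx⟩ = piF U F f := rfl
  rw [← h4, h1, h2, h3]

/-- extend a closed property from the dense subspace -/
lemma dense_extend {U : H ≃ₗᵢ[ℂ] H} {F : Set H}
    (hdense : Dense ((Dc U F : Set H))) {s : Set H} (hs : IsClosed s)
    (hsub : ∀ f, piF U F f ∈ s) : ∀ u, u ∈ s := by
  intro u
  have h1 : (Dc U F : Set H) ⊆ s := by
    rintro x ⟨f, rfl⟩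
    exact hsub f
  have h2 : closure (Dc U F : Set H) ⊆ s := hs.closure_subset_iff.mpr h1
  exact h2 (hdense u)

/-- the shift on the free module -/
def tau (F : Set H) : ((↥F × ℤ) →₀ ℂ) → ((↥F × ℤ) →₀ ℂ) := fun f =>
  Finsupp.equivMapDomain (Equiv.prodCongr (Equiv.refl ↥F) (Equiv.addRight 1)) f

lemma tau_single (F : Set H) (e : ↥F) (n : ℤ) (a : ℂ) :
    tau F (Finsupp.single (e, n) a) = Finsupp.single (e, n + 1) a := by
  unfold tau
  rw [Finsupp.equivMapDomain_single]
  rfl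

lemma tau_add (F : Set H) (f g : (↥F × ℤ) →₀ ℂ) : tau F (f + g) = tau F f + tau F g := by
  unfold tau
  ext p
  simp [Finsupp.equivMapDomain_apply]

lemma zpow_succ_apply (U : H ≃ₗᵢ[ℂ] H) (n : ℤ) (x : H) :
    (U ^ (n + 1)) x = U ((U ^ n) x) := by
  have : (U : H ≃ₗᵢ[ℂ] H) ∘ (U ^ n) = ⇑(U ^ (n + 1)) := by
    rw [← LinearIsometryEquiv.coe_mul]
    congr 1
    rw [add_comm, zpow_add, zpow_one]
  exact (congrFun this x).symm

lemma piF_tau (U : H ≃ₗᵢ[ℂ] H) (F : Set H) (f : (↥F × ℤ) →₀ ℂ) :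
    piF U F (tau F f) = U (piF U F f) := by
  induction f using Finsupp.induction₂ with
  | zero => simp [tau]
  | add_single p a f' _ _ ih =>
    obtain ⟨e, n⟩ := p
    rw [tau_add, map_add, map_add, map_add, ih, tau_single, piF_single, piF_single,
      zpow_succ_apply, map_smul]

lemma lam_tau (U : H ≃ₗᵢ[ℂ] H) (F : Set H) (f : (↥F × ℤ) →₀ ℂ) :
    lam U F (tau F f) = U.symm (lam U F f) := by
  induction f using Finsupp.induction₂ with
  | zero => simp [tau, lam_zero]
  | add_single p a f' _ _ ih =>
    obtain ⟨e, n⟩ := p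
    rw [tau_add, lam_add, lam_add, map_add, ih, tau_single, lam_single, lam_single, map_smul]
    congr 2
    have h1 : (U.symm : H → H) = ⇑(U⁻¹) := by rw [LinearIsometryEquiv.coe_inv]
    rw [congrFun h1 ((U ^ (-n)) (e : H))]
    have : (U⁻¹ : H ≃ₗᵢ[ℂ] H) ∘ (U ^ (-n)) = ⇑(U ^ (-(n + 1))) := by
      rw [← LinearIsometryEquiv.coe_mul]
      congr 1
      rw [← zpow_neg_one, ← zpow_add]
      congr 1
      ring
    exact (congrFun this (e : H)).symm

/-- Zorn: a maximal good family has dense span -/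
lemma exists_good_dense (U : H ≃ₗᵢ[ℂ] H) :
    ∃ F : Set H, Good U F ∧ Dense ((Dc U F : Set H)) := by
  obtain ⟨M, hM⟩ := zorn_subset {F : Set H | Good U F} (by
    intro c hc hchain
    refine ⟨⋃₀ c, ?_, fun s hs => Set.subset_sUnion_of_mem hs⟩
    intro e he e' he' hne m n
    obtain ⟨s, hs, hes⟩ := he
    obtain ⟨t, ht, het⟩ := he'
    rcases hchain.total hs ht with h | h
    · exact hc ht e (h hes) e' het hne m n
    · exact hc hs e hes e' (h het) hne m n)
  refine ⟨M, hM.prop, ?_⟩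
  rw [Submodule.dense_iff_topologicalClosure_eq_top]
  rw [Submodule.topologicalClosure_eq_top_iff]
  rw [Submodule.eq_bot_iff]
  intro x hx
  by_contra hx0
  have hgen : ∀ (e : H) (he : e ∈ M) (k : ℤ), (U ^ k) e ∈ Dc U M := by
    intro e he k
    refine ⟨Finsupp.single (⟨e, he⟩, k) 1, ?_⟩
    rw [piF_single, one_smul]
  have hxM : x ∉ M := by
    intro hxM
    apply hx0
    rw [← inner_self_eq_zero (𝕜 := ℂ)]
    apply Submodule.inner_right_of_mem_orthogonal (K := Dc U M) _ hx
    have := hgen x hxM 0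
    simpa using this
  have hgood : Good U (insert x M) := by
    intro e he e' he' hne m n
    rcases he with heq | heM
    · rcases he' with heq' | he'M
      · exact absurd (heq.trans heq'.symm) hne
      · rw [heq, ← inner_conj_symm, inner_zpow]
        have h0 : ⟪(U ^ (n - m)) e', x⟫_ℂ = 0 :=
          Submodule.inner_right_of_mem_orthogonal (hgen e' he'M (n - m)) hx
        rw [h0, map_zero]
    · rcases he' with heq' | he'M
      · rw [heq', inner_zpow]
        exact Submodule.inner_right_of_mem_orthogonal (hgen e heM (m - n)) hx
      · exact hM.prop e heM e' he'M hne m n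
  have : insert x M ⊆ M := hM.2 hgood (Set.subset_insert x M)
  exact hxM (this (Set.mem_insert x M))

end GLuc

end GodicLucenko

/-- Godič–Lucenko: Every unitary operator `U` on a separable complex Hilbert
space can be written as a product `U = K ∘ L` of two conjugations (antilinear involutive
isometries). -/
theorem stmt13 (H : Type) [NormedAddCommGroup H] [InnerProductSpace ℂ H] [CompleteSpace H]
    [TopologicalSpace.SeparableSpace H]
    (U : H ≃ₗᵢ[ℂ] H) :
    ∃ K L : H → H,
      (∀ u v, K (u + v) = K u + K v) ∧
      (∀ (a : ℂ) u, K (a • u) = (starRingEnd ℂ) a • K u) ∧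
      (∀ u, K (K u) = u) ∧
      (∀ u v, (inner ℂ (K u) (K v) : ℂ) = inner ℂ v u) ∧
      (∀ u v, L (u + v) = L u + L v) ∧
      (∀ (a : ℂ) u, L (a • u) = (starRingEnd ℂ) a • L u) ∧
      (∀ u, L (L u) = u) ∧
      (∀ u v, (inner ℂ (L u) (L v) : ℂ) = inner ℂ v u) ∧
      (∀ u, U u = K (L u)) := by
  obtain ⟨F, hF, hdense⟩ := GLuc.exists_good_dense U
  set L' := GLuc.Lc U F hF hdense with hL'
  have hLpi : ∀ f, L' (GLuc.piF U F f) = GLuc.lam U F f := GLuc.Lc_piF U F hF hdense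
  have hLadd : ∀ u v, L' (u + v) = L' u + L' v := fun u v => map_add L' u v
  have hLsmul : ∀ (a : ℂ) (u : H), L' (a • u) = (starRingEnd ℂ) a • L' u := by
    intro a
    have hclosed : IsClosed {u : H | L' (a • u) = (starRingEnd ℂ) a • L' u} := by
      apply isClosed_eq
      · exact L'.continuous.comp (continuous_const_smul a)
      · exact L'.continuous.const_smul ((starRingEnd ℂ) a)
    refine GLuc.dense_extend hdense hclosed ?_
    intro f
    show L' (a • GLuc.piF U F f) = (starRingEnd ℂ) a • L' (GLuc.piF U F f)
    rw [← map_smul (GLuc.piF U F) a f, hLpi, hLpi, GLuc.lam_smul]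
  have hLinv : ∀ u, L' (L' u) = u := by
    have hclosed : IsClosed {u : H | L' (L' u) = u} :=
      isClosed_eq (L'.continuous.comp L'.continuous) continuous_id
    refine GLuc.dense_extend hdense hclosed ?_
    intro f
    show L' (L' (GLuc.piF U F f)) = GLuc.piF U F f
    rw [hLpi]
    have h1 : GLuc.lam U F f = GLuc.piF U F (GLuc.sg F f) := rfl
    rw [h1, hLpi, GLuc.lam_sg]
  have hLinner : ∀ u v : H, ⟪L' u, L' v⟫_ℂ = ⟪v, u⟫_ℂ := by
    have step1 : ∀ f (v : H), ⟪L' (GLuc.piF U F f), L' v⟫_ℂ = ⟪v, GLuc.piF U F f⟫_ℂ := by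
      intro f
      have hclosed :
          IsClosed {v : H | ⟪L' (GLuc.piF U F f), L' v⟫_ℂ = ⟪v, GLuc.piF U F f⟫_ℂ} := by
        apply isClosed_eq
        · exact Continuous.inner continuous_const L'.continuous
        · exact Continuous.inner continuous_id continuous_const
      refine GLuc.dense_extend hdense hclosed ?_
      intro g
      show ⟪L' (GLuc.piF U F f), L' (GLuc.piF U F g)⟫_ℂ = ⟪GLuc.piF U F g, GLuc.piF U F f⟫_ℂ
      rw [hLpi, hLpi, GLuc.key_inner hF g f]
    intro u v
    revert u
    have hclosed : IsClosed {u : H | ⟪L' u, L' v⟫_ℂ = ⟪v, u⟫_ℂ} := by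
      apply isClosed_eq
      · exact Continuous.inner L'.continuous continuous_const
      · exact Continuous.inner continuous_const continuous_id
    exact GLuc.dense_extend hdense hclosed (fun f => step1 f v)
  have hLU : ∀ u, L' (U u) = U.symm (L' u) := by
    have hclosed : IsClosed {u : H | L' (U u) = U.symm (L' u)} :=
      isClosed_eq (L'.continuous.comp U.continuous) (U.symm.continuous.comp L'.continuous)
    refine GLuc.dense_extend hdense hclosed ?_
    intro f
    show L' (U (GLuc.piF U F f)) = U.symm (L' (GLuc.piF U F f))
    rw [← GLuc.piF_tau, hLpi, hLpi, GLuc.lam_tau]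
  refine ⟨fun u => U (L' u), fun u => L' u, ?_, ?_, ?_, ?_, ?_, ?_, ?_, ?_, ?_⟩
  · intro u v
    show U (L' (u + v)) = U (L' u) + U (L' v)
    rw [hLadd, map_add]
  · intro a u
    show U (L' (a • u)) = (starRingEnd ℂ) a • U (L' u)
    rw [hLsmul, map_smul]
  · intro u
    show U (L' (U (L' u))) = u
    rw [hLU (L' u), LinearIsometryEquiv.apply_symm_apply, hLinv]
  · intro u v
    show ⟪U (L' u), U (L' v)⟫_ℂ = ⟪v, u⟫_ℂ
    rw [U.inner_map_map, hLinner]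
  · exact hLadd
  · exact hLsmul
  · exact hLinv
  · exact hLinner
  · intro u
    show U u = U (L' (L' u))
    rw [hLinv]
end
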